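/- Let P, Q be homogeneous polynomials of degree ν in x, y over ℂ with xP + yQ not identically zero, and set ω = P dx + Q dy. For N ≥ 1, the linear map F from the space of homogeneous polynomials H of degree N+1 to homogeneous 2-form coefficients, given by F(H) = (xP + yQ)(H_x Q - H_y P), has kernel of dimension at most 1; consequently F has rank at least N+1 on the (N+2)-dimensional space of homogeneous polynomials of degree N+1. -/

import Mathlib

open MvPolynomial

/-- The linear map `H ↦ (xP + yQ)·(H_x Q - H_y P)` on `ℂ[x,y]`. -/
noncomputable def Fmap (P Q : MvPolynomial (Fin 2) ℂ) :
    MvPolynomial (Fin 2) ℂ →ₗ[ℂ] MvPolynomial (Fin 2) ℂ where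
  toFun H := (X 0 * P + X 1 * Q) * (pderiv 0 H * Q - pderiv 1 H * P)
  map_add' H₁ H₂ := by simp only [map_add]; ring
  map_smul' c H := by simp only [map_smul, smul_eq_C_mul, RingHom.id_apply, pderiv_C_mul]; ring

/-! ### Auxiliary lemmas -/

lemma fin2_degree (d : Fin 2 →₀ ℕ) : d.degree = d 0 + d 1 := by
  rw [Finsupp.degree_apply, Finset.sum_subset (Finset.subset_univ d.support)]
  · simp [Fin.sum_univ_two]
  · intro i _ hi
    simpa using (Finsupp.notMem_support_iff.mp hi)

lemma fin2_ext (d : Fin 2 →₀ ℕ) : d = Finsupp.single 0 (d 0) + Finsupp.single 1 (d 1) := by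
  ext i
  fin_cases i <;> simp [Finsupp.single_apply]

lemma single2_apply_zero (k m : ℕ) :
    (Finsupp.single 0 k + Finsupp.single 1 m : Fin 2 →₀ ℕ) 0 = k := by
  simp [Finsupp.single_apply]

lemma homog_degree_eq {n : ℕ} {H : MvPolynomial (Fin 2) ℂ} (h : H.IsHomogeneous n)
    {d : Fin 2 →₀ ℕ} (hd : coeff d H ≠ 0) : d 0 + d 1 = n := by
  rw [← fin2_degree, Finsupp.degree_eq_weight_one]
  exact h hd

lemma X_mul_pderiv_monomial (i : Fin 2) (d : Fin 2 →₀ ℕ) (a : ℂ) :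
    (X i : MvPolynomial (Fin 2) ℂ) * pderiv i (monomial d a) = monomial d (a * d i) := by
  rw [pderiv_monomial]
  rcases Nat.eq_zero_or_pos (d i) with h | h
  · simp [h]
  · have hd : Finsupp.single i 1 + (d - Finsupp.single i 1) = d := by
      ext j
      rcases eq_or_ne j i with rfl | hj
      · simp [Finsupp.single_apply]; omega
      · simp [Finsupp.single_apply, Ne.symm hj, hj]
    calc (X i : MvPolynomial (Fin 2) ℂ) * monomial (d - Finsupp.single i 1) (a * d i)
        = X i ^ 1 * monomial (d - Finsupp.single i 1) (a * d i) := by rw [pow_one]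
      _ = monomial d (a * d i) := by rw [← monomial_single_add, hd]

/-- Euler's identity for homogeneous polynomials in two variables. -/
lemma euler2 {n : ℕ} {H : MvPolynomial (Fin 2) ℂ} (h : H.IsHomogeneous n) :
    X 0 * pderiv 0 H + X 1 * pderiv 1 H = (n : ℂ) • H := by
  have hr : (n : ℂ) • H = ∑ d ∈ H.support, (n : ℂ) • monomial d (coeff d H) := by
    rw [← Finset.smul_sum, ← H.as_sum]
  rw [hr]
  conv_lhs => rw [H.as_sum]
  rw [map_sum (pderiv 0), map_sum (pderiv 1), Finset.mul_sum, Finset.mul_sum,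
    ← Finset.sum_add_distrib]
  refine Finset.sum_congr rfl fun d hd => ?_
  rw [X_mul_pderiv_monomial, X_mul_pderiv_monomial, ← map_add, ← mul_add, smul_monomial]
  congr 1
  have h2 : d 0 + d 1 = n := homog_degree_eq h (mem_support_iff.mp hd)
  rw [smul_eq_mul, ← h2]
  push_cast
  ring

/-! ### Dehomogenization -/

/-- Dehomogenization: substitute `y = 1`. -/
noncomputable def Dh : MvPolynomial (Fin 2) ℂ →ₐ[ℂ] Polynomial ℂ :=
  aeval ![Polynomial.X, 1]

lemma Dh_monomial (d : Fin 2 →₀ ℕ) (a : ℂ) :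
    Dh (monomial d a) = Polynomial.C a * Polynomial.X ^ (d 0) := by
  rw [Dh, aeval_monomial]
  congr 1
  rw [Finsupp.prod_fintype _ _ (fun i => pow_zero _), Fin.prod_univ_two]
  simp

lemma Dh_derivative (H : MvPolynomial (Fin 2) ℂ) :
    Polynomial.derivative (Dh H) = Dh (pderiv 0 H) := by
  induction H using MvPolynomial.induction_on with
  | C a => simp [Dh]
  | add p q hp hq => simp [map_add, hp, hq]
  | mul_X p i hp =>
    rw [map_mul, Polynomial.derivative_mul, hp, pderiv_mul, map_add, map_mul, map_mul]
    congr 1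
    rw [pderiv_X]
    fin_cases i <;> simp [Dh, Pi.single_apply]

lemma Dh_coeff {n : ℕ} {H : MvPolynomial (Fin 2) ℂ} (h : H.IsHomogeneous n) (k : ℕ) :
    (Dh H).coeff k = coeff (Finsupp.single 0 k + Finsupp.single 1 (n - k)) H := by
  conv_lhs => rw [H.as_sum]
  rw [map_sum, Polynomial.finset_sum_coeff]
  have hterm : ∀ d : Fin 2 →₀ ℕ,
      (Dh (monomial d (coeff d H))).coeff k = if k = d 0 then coeff d H else 0 := by
    intro d
    rw [Dh_monomial, Polynomial.coeff_C_mul, Polynomial.coeff_X_pow]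
    split <;> simp
  set b : Fin 2 →₀ ℕ := Finsupp.single 0 k + Finsupp.single 1 (n - k) with hb
  rw [Finset.sum_eq_single b]
  · rw [hterm, if_pos (single2_apply_zero k (n-k)).symm]
  · intro d hd hdb
    rw [hterm]
    split
    · next heq =>
      exfalso
      apply hdb
      have h1 : d 0 + d 1 = n := homog_degree_eq h (mem_support_iff.mp hd)
      have h2 : n - k = d 1 := by omega
      rw [hb, h2, heq, ← fin2_ext d]
    · rfl
  · intro hbs
    rw [hterm, if_pos (single2_apply_zero k (n-k)).symm]
    exact notMem_support_iff.mp hbs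

lemma Dh_inj {n : ℕ} {H : MvPolynomial (Fin 2) ℂ} (h : H.IsHomogeneous n)
    (h0 : Dh H = 0) : H = 0 := by
  ext d
  by_contra hd
  rw [coeff_zero] at hd
  push_neg at hd
  have h1 : d 0 + d 1 = n := homog_degree_eq h hd
  have h2 : coeff d H = (Dh H).coeff (d 0) := by
    rw [Dh_coeff h]
    have h3 : n - d 0 = d 1 := by omega
    rw [h3, ← fin2_ext d]
  rw [h0] at h2
  simp at h2
  exact hd h2

/-! ### One-variable Wronskian lemma -/

lemma lc_derivative (g : Polynomial ℂ) (hdg : 1 ≤ g.natDegree) :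
    (Polynomial.derivative g).leadingCoeff = g.natDegree * g.leadingCoeff := by
  open Polynomial in
  have hco : (derivative g).coeff (g.natDegree - 1) = g.natDegree * g.leadingCoeff := by
    rw [coeff_derivative, Nat.sub_add_cancel hdg, coeff_natDegree]
    push_cast [Nat.cast_sub hdg]
    ring
  open Polynomial in
  have hne : (g.natDegree : ℂ) * g.leadingCoeff ≠ 0 := by
    apply mul_ne_zero
    · exact_mod_cast Nat.cast_ne_zero (R := ℂ) |>.mpr (by omega)
    · exact Polynomial.leadingCoeff_ne_zero.mpr (fun h0 => by simp [h0] at hdg)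
  open Polynomial in
  have hdeg : (derivative g).natDegree = g.natDegree - 1 :=
    le_antisymm (natDegree_derivative_le g) (le_natDegree_of_ne_zero (hco ▸ hne))
  rw [Polynomial.leadingCoeff, hdeg, hco]

open Polynomial in
lemma polyWron : ∀ (n : ℕ) (f g : Polynomial ℂ), g.natDegree ≤ n → f ≠ 0 →
    f * derivative g = derivative f * g → ∃ c : ℂ, g = Polynomial.C c * f := by
  intro n
  induction n with
  | zero =>
    intro f g hg hf h
    have hg' : derivative g = 0 := by
      rw [eq_C_of_natDegree_eq_zero (Nat.le_zero.mp hg)]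
      simp
    rw [hg', mul_zero] at h
    rcases mul_eq_zero.mp h.symm with hf' | hg0
    · obtain ⟨a, rfl⟩ : ∃ a, f = Polynomial.C a := ⟨_, eq_C_of_derivative_eq_zero hf'⟩
      obtain ⟨b, rfl⟩ : ∃ b, g = Polynomial.C b := ⟨_, eq_C_of_natDegree_eq_zero (Nat.le_zero.mp hg)⟩
      have ha : a ≠ 0 := fun h0 => hf (by rw [h0, map_zero])
      exact ⟨b / a, by rw [← Polynomial.C_mul, div_mul_cancel₀ _ ha]⟩
    · exact ⟨0, by rw [hg0, map_zero, zero_mul]⟩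
  | succ n ih =>
    intro f g hg hf h
    by_cases hg' : derivative g = 0
    · rw [hg', mul_zero] at h
      rcases mul_eq_zero.mp h.symm with hf' | hg0
      · obtain ⟨a, rfl⟩ : ∃ a, f = Polynomial.C a := ⟨_, eq_C_of_derivative_eq_zero hf'⟩
        obtain ⟨b, rfl⟩ : ∃ b, g = Polynomial.C b := ⟨_, eq_C_of_derivative_eq_zero hg'⟩
        have ha : a ≠ 0 := fun h0 => hf (by rw [h0, map_zero])
        exact ⟨b / a, by rw [← Polynomial.C_mul, div_mul_cancel₀ _ ha]⟩
      · exact ⟨0, by rw [hg0, map_zero, zero_mul]⟩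
    · have hgne : g ≠ 0 := fun h0 => hg' (by rw [h0]; simp)
      have hf' : derivative f ≠ 0 := by
        intro h0
        rw [h0, zero_mul] at h
        exact (mul_ne_zero hf hg') h
      have hdg : 1 ≤ g.natDegree := by
        by_contra hlt
        push_neg at hlt
        exact hg' (by rw [eq_C_of_natDegree_eq_zero (Nat.lt_one_iff.mp hlt)]; simp)
      have hdf : 1 ≤ f.natDegree := by
        by_contra hlt
        push_neg at hlt
        exact hf' (by rw [eq_C_of_natDegree_eq_zero (Nat.lt_one_iff.mp hlt)]; simp)
      have hld : (f * derivative g).leadingCoeff = (derivative f * g).leadingCoeff := by rw [h]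
      rw [leadingCoeff_mul, leadingCoeff_mul, lc_derivative g hdg, lc_derivative f hdf] at hld
      have hlcf : f.leadingCoeff ≠ 0 := leadingCoeff_ne_zero.mpr hf
      have hlcg : g.leadingCoeff ≠ 0 := leadingCoeff_ne_zero.mpr hgne
      have hdeq : f.natDegree = g.natDegree := by
        have h2 : (f.natDegree : ℂ) * (f.leadingCoeff * g.leadingCoeff)
            = (g.natDegree : ℂ) * (f.leadingCoeff * g.leadingCoeff) := by
          linear_combination -hld
        have h3 := mul_right_cancel₀ (mul_ne_zero hlcf hlcg) h2
        exact_mod_cast h3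
      set c : ℂ := g.leadingCoeff / f.leadingCoeff with hc
      set p : Polynomial ℂ := g - Polynomial.C c * f with hp
      have hder : f * derivative p = derivative f * p := by
        rw [hp, derivative_sub, Polynomial.derivative_C_mul, mul_sub, mul_sub, h]
        ring
      have hfc : f.coeff g.natDegree = f.leadingCoeff := by rw [← hdeq, coeff_natDegree]
      have hcoeff : p.coeff g.natDegree = 0 := by
        rw [hp, Polynomial.coeff_sub, Polynomial.coeff_C_mul, coeff_natDegree, hfc, hc]
        field_simp
        simp
      have hple : p.natDegree ≤ g.natDegree := by
        refine le_trans (natDegree_sub_le _ _) (max_le le_rfl ?_)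
        exact (Polynomial.natDegree_C_mul_le _ _).trans hdeq.le
      have hp0 : p = 0 := by
        by_contra hpne
        have h1 : p.natDegree < g.natDegree := by
          rcases lt_or_eq_of_le hple with h1 | h1
          · exact h1
          · exact absurd (by rw [leadingCoeff, h1]; exact hcoeff)
              (leadingCoeff_ne_zero.mpr hpne)
        obtain ⟨c', hc'⟩ := ih f p (by omega) hf hder
        have hc'ne : c' ≠ 0 := fun h0 => hpne (by rw [hc', h0, map_zero, zero_mul])
        have h4 : p.natDegree = f.natDegree := by rw [hc', Polynomial.natDegree_C_mul hc'ne]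
        omega
      exact ⟨c, by rw [← sub_eq_zero, ← hp, hp0]⟩

/-! ### Dimension of the space of homogeneous polynomials -/

noncomputable def coeffMap (n : ℕ) :
    (homogeneousSubmodule (Fin 2) ℂ n) →ₗ[ℂ] (Fin (n+1) → ℂ) where
  toFun H := fun i => coeff (Finsupp.single 0 (i : ℕ) + Finsupp.single 1 (n - i)) H.1
  map_add' H1 H2 := by funext i; simp [coeff_add]
  map_smul' c H := by funext i; simp

lemma coeffMap_bij (n : ℕ) : Function.Bijective (coeffMap n) := by
  constructor
  · rw [injective_iff_map_eq_zero]
    intro H hH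
    have hmem := H.2
    rw [mem_homogeneousSubmodule] at hmem
    ext1
    rw [Submodule.coe_zero]
    ext d
    rw [coeff_zero]
    by_contra hd
    have h1 : d 0 + d 1 = n := homog_degree_eq hmem hd
    have h2 : (d 0) < n + 1 := by omega
    have h3 := congrFun hH ⟨d 0, h2⟩
    simp only [coeffMap, LinearMap.coe_mk, AddHom.coe_mk, Pi.zero_apply] at h3
    have h4 : n - d 0 = d 1 := by omega
    rw [h4, ← fin2_ext d] at h3
    exact hd h3
  · intro c
    set Hp : MvPolynomial (Fin 2) ℂ :=
      ∑ i : Fin (n+1), monomial (Finsupp.single 0 (i : ℕ) + Finsupp.single 1 (n - i)) (c i)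
      with hHp
    have hhom : Hp.IsHomogeneous n := by
      apply MvPolynomial.IsHomogeneous.sum
      intro i _
      apply isHomogeneous_monomial
      rw [fin2_degree, single2_apply_zero]
      have : ((Finsupp.single 0 (i:ℕ) + Finsupp.single 1 (n - i) : Fin 2 →₀ ℕ)) 1 = n - i := by
        simp [Finsupp.single_apply]
      rw [this]
      omega
    refine ⟨⟨Hp, (mem_homogeneousSubmodule n Hp).mpr hhom⟩, ?_⟩
    funext i
    simp only [coeffMap, LinearMap.coe_mk, AddHom.coe_mk]
    rw [hHp, coeff_sum, Finset.sum_eq_single i]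
    · rw [coeff_monomial, if_pos rfl]
    · intro j _ hji
      rw [coeff_monomial, if_neg]
      intro heq
      apply hji
      have := congrArg (fun d : Fin 2 →₀ ℕ => d 0) heq
      simp only [single2_apply_zero] at this
      exact Fin.ext this
    · intro hi
      exact absurd (Finset.mem_univ i) hi

noncomputable def homogEquiv (n : ℕ) :
    (homogeneousSubmodule (Fin 2) ℂ n) ≃ₗ[ℂ] (Fin (n+1) → ℂ) :=
  LinearEquiv.ofBijective (coeffMap n) (coeffMap_bij n)

instance homogFD (n : ℕ) : FiniteDimensional ℂ (homogeneousSubmodule (Fin 2) ℂ n) :=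
  Module.Finite.equiv (homogEquiv n).symm

lemma homog_finrank (n : ℕ) :
    Module.finrank ℂ (homogeneousSubmodule (Fin 2) ℂ n) = n + 1 := by
  rw [(homogEquiv n).finrank_eq]
  simp [Module.finrank_fintype_fun_eq_card]

/-! ### The key dependence lemma -/

lemma key_dep {N : ℕ} {P Q H₁ H₂ : MvPolynomial (Fin 2) ℂ}
    (hrad : X 0 * P + X 1 * Q ≠ 0)
    (h1 : H₁.IsHomogeneous (N+1)) (h2 : H₂.IsHomogeneous (N+1))
    (e1 : (X 0 * P + X 1 * Q) * (pderiv 0 H₁ * Q - pderiv 1 H₁ * P) = 0)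
    (e2 : (X 0 * P + X 1 * Q) * (pderiv 0 H₂ * Q - pderiv 1 H₂ * P) = 0)
    (hne : H₁ ≠ 0) : ∃ c : ℂ, H₂ = c • H₁ := by
  have g1 : pderiv 0 H₁ * Q = pderiv 1 H₁ * P :=
    sub_eq_zero.mp ((mul_eq_zero.mp e1).resolve_left hrad)
  have g2 : pderiv 0 H₂ * Q = pderiv 1 H₂ * P :=
    sub_eq_zero.mp ((mul_eq_zero.mp e2).resolve_left hrad)
  have E1 : X 0 * pderiv 0 H₁ + X 1 * pderiv 1 H₁ = C ((N+1 : ℕ) : ℂ) * H₁ := by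
    rw [← smul_eq_C_mul]; exact euler2 h1
  have E2 : X 0 * pderiv 0 H₂ + X 1 * pderiv 1 H₂ = C ((N+1 : ℕ) : ℂ) * H₂ := by
    rw [← smul_eq_C_mul]; exact euler2 h2
  have a1 : (X 0 * P + X 1 * Q) * pderiv 0 H₁ = C ((N+1 : ℕ) : ℂ) * (P * H₁) := by
    linear_combination (X 1 : MvPolynomial (Fin 2) ℂ) * g1 + P * E1
  have a2 : (X 0 * P + X 1 * Q) * pderiv 0 H₂ = C ((N+1 : ℕ) : ℂ) * (P * H₂) := by
    linear_combination (X 1 : MvPolynomial (Fin 2) ℂ) * g2 + P * E2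
  have W : (X 0 * P + X 1 * Q) * (pderiv 0 H₁ * H₂ - pderiv 0 H₂ * H₁) = 0 := by
    linear_combination H₂ * a1 - H₁ * a2
  have hW : pderiv 0 H₁ * H₂ = pderiv 0 H₂ * H₁ :=
    sub_eq_zero.mp ((mul_eq_zero.mp W).resolve_left hrad)
  -- dehomogenize
  have hDW : Polynomial.derivative (Dh H₁) * Dh H₂
      = Polynomial.derivative (Dh H₂) * Dh H₁ := by
    rw [Dh_derivative, Dh_derivative, ← map_mul, ← map_mul, hW]
  have hD1 : Dh H₁ ≠ 0 := fun h0 => hne (Dh_inj h1 h0)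
  obtain ⟨c, hc⟩ := polyWron (Dh H₂).natDegree (Dh H₁) (Dh H₂) le_rfl hD1 (by linear_combination -hDW)
  refine ⟨c, ?_⟩
  have hhom : (H₂ - c • H₁).IsHomogeneous (N+1) := by
    apply h2.sub
    rw [smul_eq_C_mul]
    exact h1.C_mul c
  have hD0 : Dh (H₂ - c • H₁) = 0 := by
    rw [map_sub, smul_eq_C_mul, map_mul]
    have hC : Dh (C c) = Polynomial.C c := by
      rw [Dh]
      simp [aeval_C, Polynomial.algebraMap_eq]
    rw [hC, hc]
    ring
  have := Dh_inj hhom hD0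
  linear_combination this

/-- Let `P, Q` be homogeneous of degree `ν` with `xP + yQ ≢ 0`.  For `N ≥ 1`, the
linear map `F : H ↦ (xP + yQ)(H_x Q - H_y P)`, restricted to the `(N+2)`-dimensional
space of homogeneous polynomials of degree `N+1`, has kernel of dimension at most `1`,
hence rank at least `N+1`. -/
theorem stmt1 (ν N : ℕ) (hN : 1 ≤ N) (P Q : MvPolynomial (Fin 2) ℂ)
    (hP : P.IsHomogeneous ν) (hQ : Q.IsHomogeneous ν)
    (hrad : X 0 * P + X 1 * Q ≠ 0) :
    Module.finrank ℂ
        (LinearMap.ker ((Fmap P Q).comp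
          (Submodule.subtype (homogeneousSubmodule (Fin 2) ℂ (N + 1))))) ≤ 1 ∧
    N + 1 ≤ Module.finrank ℂ
        (LinearMap.range ((Fmap P Q).comp
          (Submodule.subtype (homogeneousSubmodule (Fin 2) ℂ (N + 1))))) := by
  set V := homogeneousSubmodule (Fin 2) ℂ (N + 1)
  set L := (Fmap P Q).comp (Submodule.subtype V) with hL
  have hker : ∀ H : V, L H = 0 ↔
      (X 0 * P + X 1 * Q) * (pderiv 0 (H : MvPolynomial (Fin 2) ℂ) * Q
        - pderiv 1 (H : MvPolynomial (Fin 2) ℂ) * P) = 0 := fun H => Iff.rfl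
  have hker1 : Module.finrank ℂ (LinearMap.ker L) ≤ 1 := by
    by_cases hex : ∃ v : LinearMap.ker L, v ≠ 0
    · obtain ⟨v, hv⟩ := hex
      apply finrank_le_one v
      intro w
      have hvne : ((v : V) : MvPolynomial (Fin 2) ℂ) ≠ 0 := by
        intro h0
        apply hv
        ext1
        ext1
        simpa using h0
      have h1 : ((v : V) : MvPolynomial (Fin 2) ℂ).IsHomogeneous (N + 1) :=
        (mem_homogeneousSubmodule _ _).mp (v : V).2
      have h2 : ((w : V) : MvPolynomial (Fin 2) ℂ).IsHomogeneous (N + 1) :=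
        (mem_homogeneousSubmodule _ _).mp (w : V).2
      have e1 := (hker (v : V)).mp (LinearMap.mem_ker.mp v.2)
      have e2 := (hker (w : V)).mp (LinearMap.mem_ker.mp w.2)
      obtain ⟨c, hc⟩ := key_dep hrad h1 h2 e1 e2 hvne
      refine ⟨c, ?_⟩
      ext1
      ext1
      simpa using hc.symm
    · push_neg at hex
      apply finrank_le_one (0 : LinearMap.ker L)
      intro w
      exact ⟨0, by rw [hex w]; simp⟩
  refine ⟨hker1, ?_⟩
  have hrn := LinearMap.finrank_range_add_finrank_ker L
  have hdim : Module.finrank ℂ V = N + 2 := homog_finrank (N + 1)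
  omega
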